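/- Let F_q be a finite field and G a finite group with gcd(|G|, q) = 1. For a group code C = (e) generated by a central idempotent e in F_q[G], the hull h(C) = C ∩ C^⊥ is the two-sided ideal generated by the central idempotent e·(1 − e*). -/

import Mathlib

open scoped BigOperators

namespace GroupCodeHulls

variable {K : Type*} [Field K] {G : Type*} [Group G]

/-- A (matrix) representation of `G` over `K` of degree `d`. -/
abbrev MatRep (K : Type*) [Field K] (G : Type*) [Group G] (d : ℕ) : Type _ :=
  G →* (Matrix (Fin d) (Fin d) K)ˣ

/-- A subspace `W ⊆ K^d` is invariant under the representation `ρ`. -/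
def IsInvariant {d : ℕ} (ρ : MatRep K G d) (W : Submodule K (Fin d → K)) : Prop :=
  ∀ g : G, ∀ x ∈ W, (ρ g : Matrix (Fin d) (Fin d) K).mulVec x ∈ W

/-- `ρ` is an irreducible representation. -/
def IsIrreducible {d : ℕ} (ρ : MatRep K G d) : Prop :=
  0 < d ∧ ∀ W : Submodule K (Fin d → K), IsInvariant ρ W → W = ⊥ ∨ W = ⊤

/-- Two representations are isomorphic. -/
def IsoRep {d₁ d₂ : ℕ} (ρ₁ : MatRep K G d₁) (ρ₂ : MatRep K G d₂) : Prop :=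
  ∃ T : (Fin d₁ → K) ≃ₗ[K] (Fin d₂ → K),
    ∀ (g : G) (x : Fin d₁ → K),
      T ((ρ₁ g : Matrix (Fin d₁) (Fin d₁) K).mulVec x)
        = (ρ₂ g : Matrix (Fin d₂) (Fin d₂) K).mulVec (T x)

/-- The character of a representation. -/
noncomputable def charOf {d : ℕ} (ρ : MatRep K G d) (g : G) : K :=
  Matrix.trace (ρ g : Matrix (Fin d) (Fin d) K)

/-- The element `e(ρ) = (d/|G|) ∑_g χ_ρ(g⁻¹) g` of the group algebra. -/
noncomputable def repIdem [Fintype G] {d : ℕ} (ρ : MatRep K G d) : MonoidAlgebra K G :=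
  ∑ g : G, MonoidAlgebra.single g ((d : K) * (Fintype.card G : K)⁻¹ * charOf ρ g⁻¹)

/-- The "transpose-inverse" of an invertible matrix, as a unit. -/
def contraUnit {n : Type*} [Fintype n] [DecidableEq n] (u : (Matrix n n K)ˣ) :
    (Matrix n n K)ˣ where
  val := Matrix.transpose (↑u⁻¹ : Matrix n n K)
  inv := Matrix.transpose (↑u : Matrix n n K)
  val_inv := by
    rw [← Matrix.transpose_mul, ← Units.val_mul, mul_inv_cancel, Units.val_one,
      Matrix.transpose_one]
  inv_val := by
    rw [← Matrix.transpose_mul, ← Units.val_mul, inv_mul_cancel, Units.val_one,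
      Matrix.transpose_one]

/-- The contragredient representation `g ↦ ᵀρ(g)⁻¹`. -/
def contra {d : ℕ} (ρ : MatRep K G d) : MatRep K G d where
  toFun g := contraUnit (ρ g)
  map_one' := by
    ext
    simp [contraUnit]
  map_mul' g h := by
    ext
    simp [contraUnit, mul_inv_rev, Matrix.transpose_mul]

/-- The Galois twist `σ ∘ ρ` of a representation. -/
def galConj {k : Type*} [Field k] [Algebra k K] (σ : K ≃ₐ[k] K) {d : ℕ}
    (ρ : MatRep K G d) : MatRep K G d :=
  (Units.map (AlgEquiv.mapMatrix σ :
      Matrix (Fin d) (Fin d) K ≃ₐ[k] Matrix (Fin d) (Fin d) K)) |>.comp ρ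

/-- `ρ₂` lies in the Galois orbit of (the isomorphism class of) `ρ₁`. -/
def SameOrbit (k : Type*) [Field k] [Algebra k K] {d₁ d₂ : ℕ}
    (ρ₁ : MatRep K G d₁) (ρ₂ : MatRep K G d₂) : Prop :=
  ∃ σ : K ≃ₐ[k] K, IsoRep (galConj σ ρ₁) ρ₂

/-- `τ 0, …, τ (s-1)` is a complete irredundant system of representatives of
the Galois orbit `[ρ]`; in particular `s = s(ρ)` is the size of the orbit. -/
def OrbitEnum (k : Type*) [Field k] [Algebra k K] {d : ℕ} (ρ : MatRep K G d)
    (s : ℕ) (τ : Fin s → MatRep K G d) : Prop :=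
  (∀ i, SameOrbit k ρ (τ i)) ∧
  (∀ i j, i ≠ j → ¬ IsoRep (τ i) (τ j)) ∧
  (∀ σ : K ≃ₐ[k] K, ∃ i, IsoRep (galConj σ ρ) (τ i))

/-- The star operation `(∑ f(g) g)* = ∑ f(g⁻¹) g` on the group algebra. -/
def starG (z : MonoidAlgebra K G) : MonoidAlgebra K G :=
  MonoidAlgebra.ofCoeff (Finsupp.equivMapDomain (Equiv.inv G) z.coeff)

/-- The Euclidean inner product on the group algebra with basis `G`. -/
noncomputable def eform [Fintype G] (u v : MonoidAlgebra K G) : K :=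
  ∑ g : G, u.coeff g * v.coeff g

/-- The underlying `K`-subspace of a two-sided ideal of `K[G]`. -/
def codeSub (C : TwoSidedIdeal (MonoidAlgebra K G)) :
    Submodule K (MonoidAlgebra K G) where
  carrier := C
  add_mem' := C.add_mem
  zero_mem' := C.zero_mem
  smul_mem' c x hx := by
    have h : (c • x : MonoidAlgebra K G) = algebraMap K (MonoidAlgebra K G) c * x :=
      Algebra.smul_def c x
    simpa [h] using C.mul_mem_left (algebraMap K (MonoidAlgebra K G) c) x hx

/-- The dual code of a two-sided ideal of `K[G]`, as a `K`-subspace. -/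
noncomputable def dualSub [Fintype G] (C : TwoSidedIdeal (MonoidAlgebra K G)) :
    Submodule K (MonoidAlgebra K G) where
  carrier := {v | ∀ u ∈ C, eform v u = 0}
  add_mem' := by
    intro a b ha hb u hu
    simp only [Set.mem_setOf_eq] at ha hb ⊢
    have h : eform (a + b) u = eform a u + eform b u := by
      unfold eform
      rw [← Finset.sum_add_distrib]
      exact Finset.sum_congr rfl fun g _ => by rw [MonoidAlgebra.coeff_add, Finsupp.add_apply, add_mul]
    rw [h, ha u hu, hb u hu, add_zero]
  zero_mem' := by
    intro u hu
    simp [eform]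
  smul_mem' := by
    intro c x hx u hu
    simp only [Set.mem_setOf_eq] at hx ⊢
    have h : eform (c • x) u = c * eform x u := by
      unfold eform
      rw [Finset.mul_sum]
      exact Finset.sum_congr rfl fun g _ => by
        rw [MonoidAlgebra.coeff_smul, Finsupp.smul_apply, smul_eq_mul, mul_assoc]
    rw [h, hx u hu, mul_zero]

/-- The hull `h(C) = C ∩ C^⊥` of a group code. -/
noncomputable def hullSub [Fintype G] (C : TwoSidedIdeal (MonoidAlgebra K G)) :
    Submodule K (MonoidAlgebra K G) :=
  codeSub C ⊓ dualSub C

/-- The dimension of the hull of a group code. -/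
noncomputable def hullDim [Fintype G] (C : TwoSidedIdeal (MonoidAlgebra K G)) : ℕ :=
  Module.finrank K ↥(hullSub C)

section Aux

variable [Fintype G]

lemma starG_apply (z : MonoidAlgebra K G) (g : G) : (starG z).coeff g = z.coeff g⁻¹ := rfl

lemma starG_starG (z : MonoidAlgebra K G) : starG (starG z) = z := by
  ext g; simp [starG_apply]

lemma mul_apply_fin (f g : MonoidAlgebra K G) (x : G) :
    (f * g).coeff x = ∑ a : G, f.coeff a * g.coeff (a⁻¹ * x) := by
  rw [MonoidAlgebra.coeff_mul_apply_left, Finsupp.sum_fintype]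
  intro a; rw [zero_mul]

lemma starG_mul (a b : MonoidAlgebra K G) : starG (a * b) = starG b * starG a := by
  ext g
  rw [starG_apply, mul_apply_fin, mul_apply_fin]
  refine Fintype.sum_equiv (Equiv.mulLeft g) _ _ fun h => ?_
  simp only [Equiv.coe_mulLeft, starG_apply, mul_inv_rev, inv_mul_cancel_left, inv_inv]
  rw [mul_comm]

lemma eform_single_right (w : MonoidAlgebra K G) (g : G) :
    eform w (MonoidAlgebra.single g (1 : K)) = w.coeff g := by
  unfold eform
  rw [Finset.sum_eq_single g]
  · simp [MonoidAlgebra.coeff_single, Finsupp.single_apply]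
  · intro b _ hb
    simp [MonoidAlgebra.coeff_single, Finsupp.single_apply, Ne.symm hb]
  · simp

lemma eform_mul_left (a b v : MonoidAlgebra K G) :
    eform v (a * b) = eform (starG a * v) b := by
  unfold eform
  simp only [mul_apply_fin, Finset.mul_sum, Finset.sum_mul, starG_apply]
  rw [← Finset.sum_product', ← Finset.sum_product']
  refine Fintype.sum_equiv
    ⟨fun p => (p.2⁻¹ * p.1, p.2⁻¹), fun p => (p.2⁻¹ * p.1, p.2⁻¹),
      fun p => by simp [mul_assoc], fun p => by simp [mul_assoc]⟩ _ _ fun p => ?_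
  simp only [Equiv.coe_fn_mk, inv_inv, inv_mul_cancel_left, mul_inv_cancel_left]
  ring

lemma mem_span_idem (f : MonoidAlgebra K G) (hc : ∀ z, f * z = z * f)
    (hf : f * f = f) (x : MonoidAlgebra K G) :
    x ∈ TwoSidedIdeal.span {f} ↔ f * x = x := by
  have h0 : (0 : MonoidAlgebra K G) ∈ {y : MonoidAlgebra K G | f * y = y} := by simp
  have hadd : ∀ {a b : MonoidAlgebra K G}, a ∈ {y : MonoidAlgebra K G | f * y = y} →
      b ∈ {y : MonoidAlgebra K G | f * y = y} → a + b ∈ {y : MonoidAlgebra K G | f * y = y} := by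
    intro a b ha hb
    simp only [Set.mem_setOf_eq] at *
    rw [mul_add, ha, hb]
  have hneg : ∀ {a : MonoidAlgebra K G}, a ∈ {y : MonoidAlgebra K G | f * y = y} →
      -a ∈ {y : MonoidAlgebra K G | f * y = y} := by
    intro a ha
    simp only [Set.mem_setOf_eq] at *
    rw [mul_neg, ha]
  have hml : ∀ {a b : MonoidAlgebra K G}, b ∈ {y : MonoidAlgebra K G | f * y = y} →
      a * b ∈ {y : MonoidAlgebra K G | f * y = y} := by
    intro a b hb
    simp only [Set.mem_setOf_eq] at *
    rw [← mul_assoc, hc a, mul_assoc, hb]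
  have hmr : ∀ {a b : MonoidAlgebra K G}, a ∈ {y : MonoidAlgebra K G | f * y = y} →
      a * b ∈ {y : MonoidAlgebra K G | f * y = y} := by
    intro a b ha
    simp only [Set.mem_setOf_eq] at *
    rw [← mul_assoc, ha]
  constructor
  · intro hx
    rw [TwoSidedIdeal.mem_span_iff] at hx
    have key := hx (TwoSidedIdeal.mk' _ h0 hadd hneg hml hmr) ?_
    · rwa [TwoSidedIdeal.mem_mk'] at key
    · intro y hy
      rw [Set.mem_singleton_iff] at hy
      subst hy
      rw [SetLike.mem_coe, TwoSidedIdeal.mem_mk']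
      exact hf
  · intro hx
    rw [← hx]
    exact TwoSidedIdeal.mul_mem_right _ f x (TwoSidedIdeal.subset_span (Set.mem_singleton f))

lemma mem_codeSub {C : TwoSidedIdeal (MonoidAlgebra K G)} {x : MonoidAlgebra K G} :
    x ∈ codeSub C ↔ x ∈ C := Iff.rfl

lemma mem_dualSub {C : TwoSidedIdeal (MonoidAlgebra K G)} {v : MonoidAlgebra K G} :
    v ∈ dualSub C ↔ ∀ u ∈ C, eform v u = 0 := Iff.rfl

lemma mem_dual_span_idem (e : MonoidAlgebra K G) (hcent : ∀ z, e * z = z * e)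
    (he : e * e = e) (v : MonoidAlgebra K G) :
    v ∈ dualSub (TwoSidedIdeal.span {e}) ↔ starG e * v = 0 := by
  rw [mem_dualSub]
  constructor
  · intro hv
    ext g
    have h1 : e * MonoidAlgebra.single g (1 : K) ∈ TwoSidedIdeal.span {e} :=
      TwoSidedIdeal.mul_mem_right _ e _ (TwoSidedIdeal.subset_span rfl)
    have h2 := hv _ h1
    rw [eform_mul_left, eform_single_right] at h2
    simpa using h2
  · intro h0 u hu
    rw [mem_span_idem e hcent he] at hu
    rw [← hu, eform_mul_left, h0]
    simp [eform]

end Aux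

/-- For a group code `C = (e)` generated by a central idempotent `e` of `F_q[G]`, the
hull `h(C) = C ∩ C^⊥` is the two-sided ideal generated by the central idempotent
`e·(1 - e*)`. -/
theorem hull_of_idempotent_code (Fq : Type*) [Field Fq] [Fintype Fq] (G : Type*)
    [Group G] [Fintype G] (hco : Nat.Coprime (Fintype.card G) (Fintype.card Fq))
    (e : MonoidAlgebra Fq G) (hcent : ∀ z, e * z = z * e) (he : IsIdempotentElem e) :
    hullSub (TwoSidedIdeal.span {e})
      = codeSub (TwoSidedIdeal.span {e * (1 - starG e)}) := by
  have he' : e * e = e := he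
  obtain ⟨s, hs⟩ : ∃ s : MonoidAlgebra Fq G, s = starG e := ⟨_, rfl⟩
  have hscomm : ∀ z, s * z = z * s := by
    intro z
    have h := congrArg starG (hcent (starG z))
    rw [starG_mul, starG_mul, starG_starG] at h
    rw [hs]
    exact h.symm
  have hss : s * s = s := by
    rw [hs, ← starG_mul, he']
  have hes : e * s = s * e := (hscomm e).symm
  obtain ⟨f, hf⟩ : ∃ f : MonoidAlgebra Fq G, f = e * (1 - s) := ⟨_, rfl⟩
  have hfe : f = e - e * s := by rw [hf, mul_sub, mul_one]
  have hfcomm : ∀ z, f * z = z * f := by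
    intro z
    rw [hfe, sub_mul, mul_sub, hcent z, mul_assoc, hscomm z, ← mul_assoc, hcent z, mul_assoc]
  have hff : f * f = f := by
    have h1 : e * s * (e * s) = e * s := by
      rw [mul_assoc, ← mul_assoc s e, ← hes, mul_assoc, hss, ← mul_assoc, he']
    have h2 : e * (e * s) = e * s := by rw [← mul_assoc, he']
    have h3 : e * s * e = e * s := by
      rw [mul_assoc, ← hes, ← mul_assoc, he']
    rw [hfe, sub_mul, mul_sub, mul_sub, he', h1, h2, h3, sub_sub_sub_cancel_right]
  ext x
  rw [hullSub, Submodule.mem_inf, mem_codeSub, mem_codeSub, ← hs, ← hf,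
    mem_span_idem e hcent he', mem_span_idem f hfcomm hff,
    mem_dual_span_idem e hcent he', ← hs]
  constructor
  · rintro ⟨hex, hsx⟩
    rw [hfe, sub_mul, mul_assoc, hsx, mul_zero, sub_zero, hex]
  · intro hfx
    have hef : e * f = f := by rw [hf, ← mul_assoc, he']
    have hsf : s * f = 0 := by
      rw [hf, ← mul_assoc, ← hes, mul_assoc, mul_sub, mul_one, hss, sub_self, mul_zero]
    constructor
    · rw [← hfx, ← mul_assoc, hef]
    · rw [← hfx, ← mul_assoc, hsf, zero_mul]


end GroupCodeHulls
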